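/- Let W be a finite Coxeter group. For every v, w ∈ W, the set [e,v]_L ∩ [e,w] = {x ∈ W : x ≤_L v and x ≤ w} has a unique element of maximal length. -/

import Mathlib

/-- The left weak Bruhat order: `u ≤_L v` iff `ℓ(vu⁻¹) + ℓ(u) = ℓ(v)`. -/
def lWeak {B W : Type*} [Group W] {M : CoxeterMatrix B} (cs : CoxeterSystem M W)
    (u v : W) : Prop :=
  cs.length (v * u⁻¹) + cs.length u = cs.length v

/-- The strong Bruhat order: `u ≤ v` iff some reduced word for `v` has a subword
which is a word for `u`. -/
def bruhat {B W : Type*} [Group W] {M : CoxeterMatrix B} (cs : CoxeterSystem M W)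
    (u v : W) : Prop :=
  ∃ ω : List B, cs.IsReduced ω ∧ cs.wordProd ω = v ∧
    ∃ ω' : List B, ω'.Sublist ω ∧ cs.wordProd ω' = u

namespace BruhatAux

open CoxeterSystem List

variable {B W : Type*} [Group W] {M : CoxeterMatrix B} (cs : CoxeterSystem M W)

local prefix:100 "s" => cs.simple
local prefix:100 "π" => cs.wordProd
local prefix:100 "ℓ" => cs.length
local prefix:100 "ris" => cs.rightInvSeq

section Sigma

variable [DecidableEq W]

/-- the ±1-cocycle permutation attached to a simple reflection. -/
def sigFun (i : B) : W × ZMod 2 → W × ZMod 2 :=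
  fun p => (s i * p.1 * s i, p.2 + if p.1 = s i then 1 else 0)

theorem simple_conj_eq_iff (i : B) (t : W) : s i * t * s i = s i ↔ t = s i := by
  constructor
  · intro h
    have := congrArg (fun x => s i * x * s i) h
    simpa [mul_assoc, cs.simple_mul_simple_cancel_left, cs.simple_mul_simple_self] using this
  · rintro rfl; simp [cs.simple_mul_simple_self, cs.simple_mul_simple_cancel_left]

theorem sigFun_invol (i : B) : Function.Involutive (sigFun cs i) := by
  intro ⟨t, e⟩
  simp only [sigFun, simple_conj_eq_iff]
  refine Prod.ext ?_ ?_
  · simp [mul_assoc, cs.simple_mul_simple_self, cs.simple_mul_simple_cancel_left]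
  · show (e + _) + _ = e
    rcases eq_or_ne t (s i) with h | h <;>
      simp [h, add_assoc, show (1 + 1 : ZMod 2) = 0 from rfl]

def sig (i : B) : Equiv.Perm (W × ZMod 2) := (sigFun_invol cs i).toPerm

theorem sig_apply (i : B) (t : W) (e : ZMod 2) :
    sig cs i (t, e) = (s i * t * s i, e + if t = s i then 1 else 0) := rfl

/-- product of sig's along a word -/
def sigProd (ω : List B) : Equiv.Perm (W × ZMod 2) := (ω.map (sig cs)).prod

theorem sigProd_apply (ω : List B) (t : W) (e : ZMod 2) :
    sigProd cs ω (t, e) = (π ω * t * (π ω)⁻¹, e + ((ris ω).count t : ZMod 2)) := by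
  induction ω generalizing e with
  | nil => simp [sigProd]
  | cons i ω ih =>
      have hmul : sigProd cs (i :: ω) = sig cs i * sigProd cs ω := by
        simp [sigProd]
      rw [hmul, Equiv.Perm.mul_apply, ih, sig_apply]
      have hris : ris (i :: ω) = ((π ω)⁻¹ * (s i) * (π ω)) :: ris ω := rfl
      rw [hris, count_cons]
      have hiff : (π ω * t * (π ω)⁻¹ = s i) ↔ (t = (π ω)⁻¹ * s i * π ω) := by
        constructor
        · intro h; rw [← h]; group
        · intro h; rw [h]; group
      refine Prod.ext ?_ ?_
      · show _ = π (i :: ω) * t * (π (i :: ω))⁻¹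
        rw [cs.wordProd_cons, mul_inv_rev, cs.inv_simple]; group
      · show _ = e + ((_ + _ : ℕ) : ZMod 2)
        have hcond : (if (π ω * t * (π ω)⁻¹ = s i) then (1:ZMod 2) else 0)
            = (if ((π ω)⁻¹ * s i * π ω == t) = true then (1:ZMod 2) else 0) := by
          simp only [beq_iff_eq, hiff]
          rcases eq_or_ne t ((π ω)⁻¹ * s i * π ω) with h | h
          · simp [h]
          · simp [h, Ne.symm h]
        rw [hcond]
        push_cast
        ring

theorem simple_conj_simple_pow (i j : B) (k : ℕ) :
    s j * (s i * s j) ^ k * s j = ((s i * s j) ^ k)⁻¹ := by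
  have h1 : s j * (s i * s j) * (s j)⁻¹ = (s i * s j)⁻¹ := by
    rw [mul_inv_rev, cs.inv_simple, cs.inv_simple]
    calc s j * (s i * s j) * s j = s j * s i * (s j * s j) := by group
    _ = s j * s i := by rw [cs.simple_mul_simple_self, mul_one]
  calc s j * (s i * s j) ^ k * s j = s j * (s i * s j) ^ k * (s j)⁻¹ := by rw [cs.inv_simple]
  _ = (s j * (s i * s j) * (s j)⁻¹) ^ k := by rw [conj_pow]
  _ = ((s i * s j)⁻¹) ^ k := by rw [h1]
  _ = ((s i * s j) ^ k)⁻¹ := by rw [inv_pow]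

theorem ris_alternatingWord (i j : B) (n : ℕ) :
    ris (alternatingWord i j n)
      = ((List.range n).reverse).map (fun k => s j * (s i * s j) ^ k) := by
  induction n with
  | zero => simp [alternatingWord]
  | succ n ih =>
      rw [alternatingWord_succ' i j n]
      show ((π (alternatingWord i j n))⁻¹ * (s (if Even n then j else i))
          * (π (alternatingWord i j n))) :: ris (alternatingWord i j n) = _
      rw [ih, List.range_succ, List.reverse_append, List.reverse_singleton,
        List.singleton_append, List.map_cons]
      congr 1
      rw [cs.prod_alternatingWord_eq_mul_pow]
      rcases Nat.even_or_odd n with he | ho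
      · obtain ⟨r, hr⟩ := he
        have h2 : n / 2 = r := by omega
        rw [if_pos ⟨r, hr⟩, if_pos ⟨r, hr⟩, h2, one_mul]
        calc ((s i * s j) ^ r)⁻¹ * s j * (s i * s j) ^ r
            = (s j * (s i * s j) ^ r * s j) * s j * (s i * s j) ^ r := by
              rw [simple_conj_simple_pow]
          _ = s j * (s i * s j) ^ r * (s j * s j) * (s i * s j) ^ r := by group
          _ = s j * ((s i * s j) ^ r * (s i * s j) ^ r) := by
              rw [cs.simple_mul_simple_self]; group
          _ = s j * (s i * s j) ^ n := by rw [← pow_add]; congr 2; omega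
      · obtain ⟨r, hr⟩ := ho
        have hne : ¬ Even n := by
          rw [hr]; exact (Nat.not_even_iff_odd).mpr ⟨r, rfl⟩
        have h2 : n / 2 = r := by omega
        rw [if_neg hne, if_neg hne, h2]
        calc (s j * (s i * s j) ^ r)⁻¹ * s i * (s j * (s i * s j) ^ r)
            = ((s i * s j) ^ r)⁻¹ * (s j * s i * s j) * (s i * s j) ^ r := by
              rw [mul_inv_rev, cs.inv_simple]; group
          _ = (s j * (s i * s j) ^ r * s j) * (s j * s i * s j) * (s i * s j) ^ r := by
              rw [simple_conj_simple_pow]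
          _ = s j * (s i * s j) ^ r * (s j * s j) * s i * s j * (s i * s j) ^ r := by group
          _ = s j * ((s i * s j) ^ r * (s i * s j) * (s i * s j) ^ r) := by
              rw [cs.simple_mul_simple_self]; group
          _ = s j * (s i * s j) ^ n := by
              rw [← pow_succ, ← pow_add]; congr 2; omega

theorem count_ris_relator_even (i j : B) (t : W) :
    Even ((ris (alternatingWord i j (2 * M i j))).count t) := by
  rw [ris_alternatingWord, List.map_reverse, List.count_reverse, two_mul, List.range_add,
    List.map_append, List.count_append, List.map_map]
  have hmc : ((List.range (M i j)).map ((fun k => s j * (s i * s j) ^ k) ∘ (M i j + ·)))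
      = (List.range (M i j)).map (fun k => s j * (s i * s j) ^ k) := by
    apply List.map_congr_left
    intro k _
    show s j * (s i * s j) ^ (M i j + k) = _
    rw [pow_add, cs.simple_mul_simple_pow i j, one_mul]
  rw [hmc]
  exact ⟨_, rfl⟩

theorem even_natCast_zmod_two {c : ℕ} (h : Even c) : ((c : ZMod 2) = 0) := by
  obtain ⟨r, rfl⟩ := h
  calc ((r + r : ℕ) : ZMod 2) = (2 : ZMod 2) * r := by push_cast; ring
  _ = 0 := by rw [show (2 : ZMod 2) = 0 from rfl, zero_mul]

theorem sigProd_cons (i : B) (ω : List B) :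
    sigProd cs (i :: ω) = sig cs i * sigProd cs ω := by simp [sigProd]

theorem sig_liftable : CoxeterMatrix.IsLiftable M (fun i => sig cs i) := by
  intro i j
  have hword : ∀ m : ℕ, (sig cs i * sig cs j) ^ m = sigProd cs (alternatingWord i j (2 * m)) := by
    intro m
    induction m with
    | zero => simp [sigProd, alternatingWord]
    | succ m ih =>
        have h2 : 2 * (m + 1) = (2 * m) + 1 + 1 := by omega
        rw [h2, alternatingWord_succ' i j, alternatingWord_succ' i j,
          if_neg (by simp [Nat.even_add_one, Nat.even_mul]), if_pos (by simp [Nat.even_mul]),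
          sigProd_cons, sigProd_cons, ← ih, pow_succ']
        rw [mul_assoc]
  show (sig cs i * sig cs j) ^ M i j = 1
  rw [hword]
  apply Equiv.ext
  rintro ⟨t, e⟩
  rw [sigProd_apply]
  have h1 : π (alternatingWord i j (2 * M i j)) = 1 := by
    rw [cs.prod_alternatingWord_eq_mul_pow, if_pos ⟨M i j, by omega⟩,
      (by omega : 2 * M i j / 2 = M i j), cs.simple_mul_simple_pow i j, one_mul]
  rw [h1, even_natCast_zmod_two (count_ris_relator_even cs i j t)]
  simp

/-- The homomorphism to the permutation group recording inversion parities. -/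
noncomputable def sigHom : W →* Equiv.Perm (W × ZMod 2) :=
  cs.lift ⟨fun i => sig cs i, sig_liftable cs⟩

theorem sigHom_simple (i : B) : sigHom cs (s i) = sig cs i :=
  cs.lift_apply_simple (sig_liftable cs) i

theorem sigHom_wordProd (ω : List B) : sigHom cs (π ω) = sigProd cs ω := by
  induction ω with
  | nil => simp [sigProd, cs.wordProd_nil]
  | cons i ω ih => rw [cs.wordProd_cons, map_mul, ih, sigHom_simple, sigProd_cons]

/-- parity of the number of times `t` occurs in the right inversion sequence of any word for
`w`. -/
noncomputable def nn (w t : W) : ZMod 2 := (sigHom cs w (t, 0)).2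

theorem nn_count (ω : List B) (t : W) : nn cs (π ω) t = ((ris ω).count t : ZMod 2) := by
  unfold nn
  rw [sigHom_wordProd, sigProd_apply, zero_add]

theorem sigHom_apply (w t : W) (e : ZMod 2) :
    sigHom cs w (t, e) = (w * t * w⁻¹, e + nn cs w t) := by
  obtain ⟨ω, rfl⟩ := cs.wordProd_surjective w
  rw [sigHom_wordProd, sigProd_apply, nn_count]

theorem nn_mul (u v t : W) : nn cs (u * v) t = nn cs v t + nn cs u (v * t * v⁻¹) := by
  have : sigHom cs (u * v) (t, 0) = sigHom cs u (sigHom cs v (t, 0)) := by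
    rw [map_mul]; rfl
  unfold nn
  rw [this, sigHom_apply cs v, sigHom_apply cs u, zero_add]
  rfl

theorem nn_simple (i : B) (t : W) : nn cs (s i) t = if t = s i then 1 else 0 := by
  unfold nn
  rw [sigHom_simple, sig_apply, zero_add]

theorem nn_refl_self {t : W} (ht : cs.IsReflection t) : nn cs t t = 1 := by
  obtain ⟨w, i, rfl⟩ := ht
  obtain ⟨α, rfl⟩ := cs.wordProd_surjective w
  induction α with
  | nil => simp [nn_simple]
  | cons k α ih =>
      set t' := π α * s i * (π α)⁻¹ with ht'
      have hta : π (k :: α) * s i * (π (k :: α))⁻¹ = (s k * t') * s k := by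
        rw [cs.wordProd_cons, ht', mul_inv_rev, cs.inv_simple]; group
      have h1 : s k * ((s k * t') * s k) * (s k)⁻¹ = t' := by
        rw [cs.inv_simple]
        calc s k * ((s k * t') * s k) * s k = (s k * s k) * t' * (s k * s k) := by group
        _ = t' := by rw [cs.simple_mul_simple_self]; group
      have h2 : t' * t' * t'⁻¹ = t' := by group
      rw [hta, nn_mul cs (s k * t') (s k), h1, nn_mul cs (s k) t', h2, ih,
        nn_simple, nn_simple]
      have hcond : ((s k * t' * s k = s k) ↔ (t' = s k)) := simple_conj_eq_iff cs k t'
      simp only [mul_assoc] at hcond ⊢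
      rcases eq_or_ne t' (s k) with h | h
      · rw [if_pos h, if_pos (hcond.mpr h)]
        decide
      · rw [if_neg h, if_neg (fun hc => h (hcond.mp hc))]
        decide

end Sigma

/-- Strong exchange property: every right inversion of `π ω` occurs in the right inversion
sequence of a reduced word `ω`. -/
theorem mem_rightInvSeq_of_isRightInversion {ω : List B} (hω : cs.IsReduced ω) {t : W}
    (ht : cs.IsReflection t) (hlt : ℓ (π ω * t) < ℓ (π ω)) : t ∈ ris ω := by
  classical
  obtain ⟨τ, hτred, hτ⟩ := cs.exists_reduced_word' (π ω * t)
  have h0 : t ∉ ris τ := by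
    intro hmem
    have h1 := (cs.isRightInversion_of_mem_rightInvSeq hτred hmem).2
    have h2 : π τ * t = π ω := by rw [← hτ, mul_assoc, ht.mul_self, mul_one]
    rw [h2, ← hτ] at h1
    omega
  have hnnv : nn cs (π ω * t) t = 0 := by
    rw [hτ, nn_count, List.count_eq_zero_of_not_mem h0, Nat.cast_zero]
  have hnnw : nn cs (π ω) t = 1 := by
    have h4 : π ω = (π ω * t) * t := by rw [mul_assoc, ht.mul_self, mul_one]
    have h3 : t * t * t⁻¹ = t := by rw [ht.mul_self, one_mul, ht.inv]
    rw [h4, nn_mul, h3, nn_refl_self cs ht, hnnv, add_zero]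
  by_contra hmem
  have h5 : ((ris ω).count t : ZMod 2) = 1 := by rw [← nn_count, hnnw]
  rw [List.count_eq_zero_of_not_mem hmem] at h5
  simpa using h5

theorem exists_eraseIdx_of_isRightInversion {ω : List B} (hω : cs.IsReduced ω) {t : W}
    (ht : cs.IsReflection t) (hlt : ℓ (π ω * t) < ℓ (π ω)) :
    ∃ j < ω.length, π ω * t = π (ω.eraseIdx j) := by
  have hmem := mem_rightInvSeq_of_isRightInversion cs hω ht hlt
  obtain ⟨j, hj, hget⟩ := List.getElem_of_mem hmem
  refine ⟨j, by simpa using hj, ?_⟩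
  rw [← cs.wordProd_mul_getD_rightInvSeq ω j]
  congr 1
  rw [List.getD_eq_getElem (ris ω) 1 hj, hget]

section Chain

/-- A single step of a Bruhat chain: multiply by a reflection on the right, increasing length. -/
def bstep (u w : W) : Prop := ∃ t, cs.IsReflection t ∧ w = u * t ∧ ℓ u < ℓ w

/-- Bruhat order, defined via chains of reflections. -/
def cle : W → W → Prop := Relation.ReflTransGen (bstep cs)

theorem deletion (ω : List B) : ∃ ρ, ρ.Sublist ω ∧ cs.IsReduced ρ ∧ π ρ = π ω := by
  induction ω using List.reverseRecOn with
  | nil => exact ⟨[], List.Sublist.refl _, by simp [CoxeterSystem.IsReduced], rfl⟩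
  | append_singleton ω k ih =>
      obtain ⟨ρ, hsub, hred, hprod⟩ := ih
      rcases cs.length_mul_simple (π ρ) k with h | h
      · refine ⟨ρ ++ [k], hsub.append (List.Sublist.refl _), ?_, ?_⟩
        · show ℓ (π (ρ ++ [k])) = _
          rw [cs.wordProd_append, cs.wordProd_singleton, h, hred]
          simp
        · rw [cs.wordProd_append, cs.wordProd_append, hprod]
      · have hlt : ℓ (π ρ * s k) < ℓ (π ρ) := by omega
        obtain ⟨j, hj, heq⟩ := exists_eraseIdx_of_isRightInversion cs hred
          (cs.isReflection_simple k) hlt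
        refine ⟨ρ.eraseIdx j, ((ρ.eraseIdx_sublist j).trans hsub).trans
          (List.sublist_append_left ω [k]), ?_, ?_⟩
        · show ℓ (π (ρ.eraseIdx j)) = _
          have hred' : ℓ (π ρ) = ρ.length := hred
          rw [← heq, List.length_eraseIdx, if_pos hj]
          omega
        · rw [← heq, cs.wordProd_append, cs.wordProd_singleton, hprod]

theorem cle_subword {y w : W} (h : cle cs y w) :
    ∀ ω : List B, cs.IsReduced ω → π ω = w → ∃ ρ, ρ.Sublist ω ∧ cs.IsReduced ρ ∧ π ρ = y := by
  induction h with
  | refl => exact fun ω hred hprod => ⟨ω, List.Sublist.refl _, hred, hprod⟩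
  | @tail b c hab hbc ih =>
      intro ω hred hprod
      obtain ⟨t, hrefl, hc, hlen⟩ := hbc
      have hb : π ω * t = b := by rw [hprod, hc, mul_assoc, hrefl.mul_self, mul_one]
      have hlt : ℓ (π ω * t) < ℓ (π ω) := by rw [hb, hprod]; exact hlen
      obtain ⟨j, hj, heq⟩ := exists_eraseIdx_of_isRightInversion cs hred hrefl hlt
      obtain ⟨ρ, hsub, hρred, hρprod⟩ := deletion cs (ω.eraseIdx j)
      obtain ⟨σ, hσ, hσred, hσprod⟩ := ih ρ hρred (by rw [hρprod, ← heq, hb])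
      exact ⟨σ, hσ.trans (hsub.trans (ω.eraseIdx_sublist j)), hσred, hσprod⟩

theorem sublist_concat_cases {α : Type*} {ρ ω : List α} {k : α} (h : ρ.Sublist (ω ++ [k])) :
    ρ.Sublist ω ∨ ∃ ρ', ρ = ρ' ++ [k] ∧ ρ'.Sublist ω := by
  have h2 : ρ.reverse.Sublist (k :: ω.reverse) := by
    simpa [List.reverse_append] using h.reverse
  rcases List.sublist_cons_iff.mp h2 with h3 | ⟨r, hr, h3⟩
  · left
    simpa using h3.reverse
  · right
    refine ⟨r.reverse, ?_, by simpa using h3.reverse⟩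
    have := congrArg List.reverse hr
    simpa using this

theorem ar_lift : ∀ n : ℕ,
    (∀ τ : List B, cs.IsReduced τ → τ.length = n →
      ∀ τ' : List B, τ'.Sublist τ → cle cs (π τ') (π τ)) ∧
    (∀ b : W, ℓ b = n → ∀ i : B, ℓ b < ℓ (b * s i) →
      ∀ a : W, cle cs a b → cle cs (a * s i) (b * s i)) := by
  intro n
  induction n using Nat.strong_induction_on with
  | _ n ih =>
  constructor
  · -- part AR
    intro τ hred hlen τ' hsub
    rcases τ.eq_nil_or_concat with rfl | ⟨τ₁, k, rfl⟩
    · rw [List.sublist_nil.mp hsub]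
      exact Relation.ReflTransGen.refl
    · rw [List.concat_eq_append] at hsub hred hlen ⊢
      have hlen1 : τ₁.length + 1 = n := by simpa using hlen
      have hredτ : ℓ (π (τ₁ ++ [k])) = τ₁.length + 1 := by
        rw [hred]; simpa using hlen.symm ▸ rfl
      have hτ₁red : cs.IsReduced τ₁ := by
        have := CoxeterSystem.IsReduced.take hred τ₁.length
        simpa [List.take_left] using this
      have hτ₁len : ℓ (π τ₁) = τ₁.length := hτ₁red
      have hπτ : π (τ₁ ++ [k]) = π τ₁ * s k := by
        rw [cs.wordProd_append, cs.wordProd_singleton]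
      have hinc : ℓ (π τ₁) < ℓ (π τ₁ * s k) := by
        rw [hτ₁len, ← hπτ, hredτ]; omega
      have hstep : bstep cs (π τ₁) (π (τ₁ ++ [k])) :=
        ⟨s k, cs.isReflection_simple k, by rw [hπτ], by rw [hπτ]; exact hinc⟩
      rcases sublist_concat_cases hsub with hcase | ⟨ρ', rfl, hρ'⟩
      · exact ((ih τ₁.length (by omega)).1 τ₁ hτ₁red rfl τ' hcase).tail hstep
      · have hAR := (ih τ₁.length (by omega)).1 τ₁ hτ₁red rfl ρ' hρ'
        have hLIFT := (ih τ₁.length (by omega)).2 (π τ₁) hτ₁len k hinc (π ρ') hAR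
        rw [cs.wordProd_append, cs.wordProd_singleton, hπτ]
        exact hLIFT
  · -- part LIFT
    intro b hlen i hinc a hcle
    have hbs : ℓ (b * s i) = ℓ b + 1 := by
      have := cs.length_mul_simple b i; omega
    rcases Relation.ReflTransGen.cases_tail hcle with heq | ⟨u, hau, hstep⟩
    · rw [heq]
      exact Relation.ReflTransGen.refl
    · obtain ⟨t, hrefl, hbu, hub⟩ := hstep
      have hstepb : bstep cs b (b * s i) :=
        ⟨s i, cs.isReflection_simple i, rfl, by omega⟩
      rcases cs.length_mul_simple u i with hui | hui
      · -- ℓ (u * s i) = ℓ u + 1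
        have h1 : cle cs (a * s i) (u * s i) :=
          (ih (ℓ u) (by omega)).2 u rfl i (by omega) a hau
        refine h1.tail ⟨s i * t * s i, ?_, ?_, ?_⟩
        · have := hrefl.conj (s i)
          rwa [cs.inv_simple] at this
        · rw [hbu]
          calc u * t * s i = u * (s i * s i) * t * s i := by
                rw [cs.simple_mul_simple_self]; group
          _ = u * s i * (s i * t * s i) := by group
        · omega
      · -- ℓ (u * s i) + 1 = ℓ u
        rcases cs.length_mul_simple a i with hai | hai
        · -- hard subcase : ℓ (a * s i) = ℓ a + 1
          obtain ⟨τur, hτred, hτprod⟩ := cs.exists_reduced_word' (u * s i)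
          have hτcanc : π (τur ++ [i]) = u := by
            rw [cs.wordProd_append, cs.wordProd_singleton, ← hτprod,
              cs.simple_mul_simple_cancel_right]
          have hτlen : (τur : List B).length = ℓ (u * s i) := by
            have : ℓ (π τur) = τur.length := hτred
            rw [← hτprod] at this; omega
          have hτured : cs.IsReduced (τur ++ [i]) := by
            show ℓ (π (τur ++ [i])) = _
            rw [hτcanc]
            simp only [List.length_append, List.length_singleton]
            omega
          obtain ⟨ρ, hρsub, hρred, hρprod⟩ := cle_subword cs hau (τur ++ [i]) hτured hτcanc
          rcases sublist_concat_cases hρsub with hcase | ⟨ρ', rfl, hρ'⟩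
          · have hAR := (ih (ℓ (u * s i)) (by omega)).1 τur hτred hτlen ρ hcase
            rw [hρprod, ← hτprod] at hAR
            have hLIFT := (ih (ℓ (u * s i)) (by omega)).2 (u * s i) rfl i
              (by rw [cs.simple_mul_simple_cancel_right]; omega) a hAR
            rw [cs.simple_mul_simple_cancel_right] at hLIFT
            exact (hLIFT.tail ⟨t, hrefl, hbu, hub⟩).tail hstepb
          · exfalso
            have hasi : a * s i = π ρ' := by
              rw [← hρprod, cs.wordProd_append, cs.wordProd_singleton,
                cs.simple_mul_simple_cancel_right]
            have h5 : ℓ (π (ρ' ++ [i])) = (ρ' ++ [i]).length := hρred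
            have h6 : ℓ (a * s i) ≤ ρ'.length := by
              rw [hasi]; exact cs.length_wordProd_le ρ'
            rw [hρprod] at h5
            simp only [List.length_append, List.length_singleton] at h5
            omega
        · -- easy subcase : ℓ (a * s i) + 1 = ℓ a
          have h1 : bstep cs (a * s i) a :=
            ⟨s i, cs.isReflection_simple i,
              by rw [mul_assoc, cs.simple_mul_simple_self, mul_one], by omega⟩
          exact ((Relation.ReflTransGen.single h1).trans hcle).tail hstepb

end Chain

section Interface

theorem bruhat_iff_cle {y w : W} : bruhat cs y w ↔ cle cs y w := by
  constructor
  · rintro ⟨ω, hred, hw, ω', hsub, hy⟩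
    have := (ar_lift cs ω.length).1 ω hred rfl ω' hsub
    rwa [hy, hw] at this
  · intro h
    obtain ⟨ω, hred, hw⟩ := cs.exists_reduced_word' w
    obtain ⟨ρ, hsub, hρred, hρprod⟩ := cle_subword cs h ω hred hw.symm
    exact ⟨ω, hred, hw.symm, ρ, hsub, hρprod⟩

/-- The subword property of the Bruhat order. -/
theorem bruhat_subword {y w : W} (h : bruhat cs y w) {ω : List B} (hred : cs.IsReduced ω)
    (hw : π ω = w) : ∃ ρ, ρ.Sublist ω ∧ cs.IsReduced ρ ∧ π ρ = y :=
  cle_subword cs ((bruhat_iff_cle cs).mp h) ω hred hw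

theorem bruhat_one (w : W) : bruhat cs 1 w := by
  obtain ⟨ω, hred, hw⟩ := cs.exists_reduced_word' w
  exact ⟨ω, hred, hw.symm, [], List.nil_sublist ω, cs.wordProd_nil⟩

theorem bruhat_length_le {y w : W} (h : bruhat cs y w) : ℓ y ≤ ℓ w := by
  obtain ⟨ω, hred, hw, ω', hsub, hy⟩ := h
  have h1 : ℓ y ≤ ω'.length := hy ▸ cs.length_wordProd_le ω'
  have h2 : ω'.length ≤ ω.length := hsub.length_le
  have h3 : (ω.length : ℕ) = ℓ w := by rw [← hw]; exact hred.symm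
  omega

theorem bruhat_eq_of_length_ge {y w : W} (h : bruhat cs y w) (hl : ℓ w ≤ ℓ y) : y = w := by
  obtain ⟨ω, hred, hw, ω', hsub, hy⟩ := h
  have h1 : ℓ y ≤ ω'.length := hy ▸ cs.length_wordProd_le ω'
  have h3 : (ω.length : ℕ) = ℓ w := by rw [← hw]; exact hred.symm
  have h4 : ω' = ω := hsub.eq_of_length (by have := hsub.length_le; omega)
  rw [← hy, h4, hw]

theorem bruhat_mul_simple_right {y w : W} (i : B) (h : bruhat cs y w)
    (hw : ℓ w < ℓ (w * s i)) : bruhat cs y (w * s i) := by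
  obtain ⟨ω, hred, hw', ω', hsub, hy⟩ := h
  refine ⟨ω ++ [i], ?_, ?_, ω', hsub.trans (List.sublist_append_left ω [i]), hy⟩
  · show ℓ (π (ω ++ [i])) = _
    rw [cs.wordProd_append, cs.wordProd_singleton, hw']
    have h5 : (ω.length : ℕ) = ℓ w := by rw [← hw']; exact hred.symm
    have := cs.length_mul_simple w i
    simp only [List.length_append, List.length_singleton]
    omega
  · rw [cs.wordProd_append, cs.wordProd_singleton, hw']

theorem bruhat_mul_simple_both {y w : W} (i : B) (h : bruhat cs y w)
    (hw : ℓ w < ℓ (w * s i)) : bruhat cs (y * s i) (w * s i) := by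
  obtain ⟨ω, hred, hw', ω', hsub, hy⟩ := h
  refine ⟨ω ++ [i], ?_, ?_, ω' ++ [i], hsub.append (List.Sublist.refl [i]), ?_⟩
  · show ℓ (π (ω ++ [i])) = _
    rw [cs.wordProd_append, cs.wordProd_singleton, hw']
    have h5 : (ω.length : ℕ) = ℓ w := by rw [← hw']; exact hred.symm
    have := cs.length_mul_simple w i
    simp only [List.length_append, List.length_singleton]
    omega
  · rw [cs.wordProd_append, cs.wordProd_singleton, hw']
  · rw [cs.wordProd_append, cs.wordProd_singleton, hy]

/-- Lifting property, upward form. -/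
theorem bruhat_lift_up {y w : W} (i : B) (hw : ℓ (w * s i) < ℓ w) (h : bruhat cs y w)
    (hy : ℓ y < ℓ (y * s i)) : bruhat cs y (w * s i) := by
  obtain ⟨τ, hτred, hτprod⟩ := cs.exists_reduced_word' (w * s i)
  have hτlen : (τ.length : ℕ) = ℓ (w * s i) := by rw [hτprod]; exact hτred.symm
  have hcanc : π (τ ++ [i]) = w := by
    rw [cs.wordProd_append, cs.wordProd_singleton, ← hτprod,
      cs.simple_mul_simple_cancel_right]
  have hωred : cs.IsReduced (τ ++ [i]) := by
    show ℓ (π (τ ++ [i])) = _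
    rw [hcanc]
    have := cs.length_mul_simple w i
    simp only [List.length_append, List.length_singleton]
    omega
  obtain ⟨ρ, hρsub, hρred, hρprod⟩ := bruhat_subword cs h hωred hcanc
  rcases sublist_concat_cases hρsub with hcase | ⟨ρ', rfl, hρ'⟩
  · exact ⟨τ, hτred, hτprod.symm, ρ, hcase, hρprod⟩
  · exfalso
    have hasi : y * s i = π ρ' := by
      rw [← hρprod, cs.wordProd_append, cs.wordProd_singleton,
        cs.simple_mul_simple_cancel_right]
    have h5 : ℓ y = ρ'.length + 1 := by
      have : ℓ (π (ρ' ++ [i])) = (ρ' ++ [i]).length := hρred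
      rw [hρprod] at this
      simpa using this
    have h6 : ℓ (y * s i) ≤ ρ'.length := by
      rw [hasi]; exact cs.length_wordProd_le ρ'
    omega

/-- Lifting property, downward form. -/
theorem bruhat_lift_down {y w : W} (i : B) (hw : ℓ (w * s i) < ℓ w) (h : bruhat cs y w)
    (hy : ℓ (y * s i) < ℓ y) : bruhat cs (y * s i) (w * s i) := by
  obtain ⟨τ, hτred, hτprod⟩ := cs.exists_reduced_word' (w * s i)
  have hcanc : π (τ ++ [i]) = w := by
    rw [cs.wordProd_append, cs.wordProd_singleton, ← hτprod,
      cs.simple_mul_simple_cancel_right]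
  have hτlen : (τ.length : ℕ) = ℓ (w * s i) := by rw [hτprod]; exact hτred.symm
  have hωred : cs.IsReduced (τ ++ [i]) := by
    show ℓ (π (τ ++ [i])) = _
    rw [hcanc]
    have := cs.length_mul_simple w i
    simp only [List.length_append, List.length_singleton]
    omega
  obtain ⟨ρ, hρsub, hρred, hρprod⟩ := bruhat_subword cs h hωred hcanc
  rcases sublist_concat_cases hρsub with hcase | ⟨ρ', rfl, hρ'⟩
  · have hinv : ℓ (π ρ * s i) < ℓ (π ρ) := by rw [hρprod]; exact hy
    obtain ⟨j, hj, heq⟩ := exists_eraseIdx_of_isRightInversion cs hρred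
      (cs.isReflection_simple i) hinv
    refine ⟨τ, hτred, hτprod.symm, ρ.eraseIdx j, (ρ.eraseIdx_sublist j).trans hcase, ?_⟩
    rw [← heq, hρprod]
  · refine ⟨τ, hτred, hτprod.symm, ρ', hρ', ?_⟩
    rw [← hρprod, cs.wordProd_append, cs.wordProd_singleton,
      cs.simple_mul_simple_cancel_right]

theorem ris_append (γ δ : List B) :
    ris (γ ++ δ) = (ris γ).map (fun t => (π δ)⁻¹ * t * π δ) ++ ris δ := by
  induction γ with
  | nil => simp
  | cons g γ' ih =>
      show ((π (γ' ++ δ))⁻¹ * s g * π (γ' ++ δ)) :: ris (γ' ++ δ) = _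
      rw [ih]
      show _ = ((π δ)⁻¹ * ((π γ')⁻¹ * s g * π γ') * π δ) :: _
      congr 1
      rw [cs.wordProd_append, mul_inv_rev]
      group

/-- Weak order lifting. -/
theorem lWeak_lift {y v : W} (i : B) (h : lWeak cs y v) (hy : ℓ y < ℓ (y * s i))
    (hv : ℓ (v * s i) < ℓ v) : lWeak cs y (v * s i) := by
  obtain ⟨γ, hγred, hγprod⟩ := cs.exists_reduced_word' (v * y⁻¹)
  obtain ⟨δ, hδred, hδprod⟩ := cs.exists_reduced_word' y
  have hprod : π (γ ++ δ) = v := by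
    rw [cs.wordProd_append, ← hγprod, ← hδprod, inv_mul_cancel_right]
  have hγlen : (γ.length : ℕ) = ℓ (v * y⁻¹) := by rw [hγprod]; exact hγred.symm
  have hδlen : (δ.length : ℕ) = ℓ y := by rw [hδprod]; exact hδred.symm
  have hred : cs.IsReduced (γ ++ δ) := by
    show ℓ (π (γ ++ δ)) = _
    rw [hprod]
    simp only [List.length_append]
    have := h
    unfold lWeak at this
    omega
  have hmem : s i ∈ ris (γ ++ δ) := by
    apply mem_rightInvSeq_of_isRightInversion cs hred (cs.isReflection_simple i)
    rw [hprod]; exact hv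
  rw [ris_append] at hmem
  rcases List.mem_append.mp hmem with hmem | hmem
  · obtain ⟨t', ht'mem, ht'⟩ := List.mem_map.mp hmem
    have hinv := cs.isRightInversion_of_mem_rightInvSeq hγred ht'mem
    rw [← hγprod] at hinv
    have h1 : v * s i * y⁻¹ = (v * y⁻¹) * t' := by
      rw [← ht', ← hδprod]
      group
    have h2 : ℓ ((v * y⁻¹) * t') < ℓ (v * y⁻¹) := hinv.2
    have h3 : ℓ (v * s i) ≤ ℓ (v * s i * y⁻¹) + ℓ y := by
      have := cs.length_mul_le (v * s i * y⁻¹) y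
      rwa [inv_mul_cancel_right] at this
    have h4 : ℓ (v * s i) + 1 = ℓ v := by
      have := cs.length_mul_simple v i
      omega
    have h5 := h
    unfold lWeak at h5 ⊢
    rw [h1] at h3 ⊢
    omega
  · exfalso
    have hinv := cs.isRightInversion_of_mem_rightInvSeq hδred hmem
    rw [← hδprod] at hinv
    have := hinv.2
    omega

theorem lWeak_right_descent {y v : W} (i : B) (h : lWeak cs y v)
    (hy : ℓ (y * s i) < ℓ y) : ℓ (v * s i) < ℓ v := by
  have h1 : v * s i = (v * y⁻¹) * (y * s i) := by group
  have h2 : ℓ (v * s i) ≤ ℓ (v * y⁻¹) + ℓ (y * s i) := by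
    rw [h1]; exact cs.length_mul_le _ _
  unfold lWeak at h
  omega

theorem lWeak_one (v : W) : lWeak cs 1 v := by
  unfold lWeak
  simp

end Interface

section Main

theorem exists_max : ∀ n : ℕ, ∀ w : W, ℓ w = n → ∀ v : W,
    ∃ m : W, (lWeak cs m v ∧ bruhat cs m w) ∧
      ∀ y : W, lWeak cs y v → bruhat cs y w → bruhat cs y m := by
  intro n
  induction n using Nat.strong_induction_on with
  | _ n ih =>
  intro w hw v
  rcases eq_or_ne w 1 with rfl | hne
  · refine ⟨1, ⟨lWeak_one cs v, bruhat_one cs 1⟩, ?_⟩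
    intro y _ hyB
    have h1 : ℓ y ≤ ℓ (1 : W) := bruhat_length_le cs hyB
    rw [cs.length_one] at h1
    have hy1 : y = 1 := cs.length_eq_zero_iff.mp (by omega)
    rw [hy1]
    exact bruhat_one cs 1
  · obtain ⟨i, hdesc⟩ := cs.exists_rightDescent_of_ne_one hne
    have hdesc' : ℓ (w * s i) < ℓ w := hdesc
    have hlen' : ℓ (w * s i) + 1 = ℓ w := by
      have := cs.length_mul_simple w i; omega
    have hcanc : (w * s i) * s i = w := cs.simple_mul_simple_cancel_right i
    have hw'inc : ℓ (w * s i) < ℓ ((w * s i) * s i) := by rw [hcanc]; omega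
    rcases cs.length_mul_simple v i with hv | hv
    · -- ℓ (v * s i) = ℓ v + 1 : keep v
      obtain ⟨m, ⟨hmW, hmB⟩, hmax⟩ := ih (ℓ (w * s i)) (by omega) (w * s i) rfl v
      refine ⟨m, ⟨hmW, ?_⟩, ?_⟩
      · have := bruhat_mul_simple_right cs i hmB hw'inc
        rwa [hcanc] at this
      · intro y hyW hyB
        have hys : ℓ y < ℓ (y * s i) := by
          rcases cs.length_mul_simple y i with h | h
          · omega
          · exact absurd (lWeak_right_descent cs i hyW (by omega)) (by omega)
        exact hmax y hyW (bruhat_lift_up cs i hdesc' hyB hys)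
    · -- ℓ (v * s i) + 1 = ℓ v : descend to v * s i
      obtain ⟨m', ⟨hmW, hmB⟩, hmax⟩ := ih (ℓ (w * s i)) (by omega) (w * s i) rfl (v * s i)
      have hminc : ℓ m' < ℓ (m' * s i) := by
        rcases cs.length_mul_simple m' i with h | h
        · omega
        · exfalso
          have h2 := lWeak_right_descent cs i hmW (by omega)
          rw [cs.simple_mul_simple_cancel_right] at h2
          omega
      have hminc' : ℓ (m' * s i) = ℓ m' + 1 := by
        have := cs.length_mul_simple m' i; omega
      refine ⟨m' * s i, ⟨?_, ?_⟩, ?_⟩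
      · -- lWeak (m' * s i) v
        unfold lWeak at hmW ⊢
        have h1 : v * (m' * s i)⁻¹ = (v * s i) * m'⁻¹ := by
          rw [mul_inv_rev, cs.inv_simple, ← mul_assoc]
        rw [h1]
        omega
      · have := bruhat_mul_simple_both cs i hmB hw'inc
        rwa [hcanc] at this
      · intro y hyW hyB
        rcases cs.length_mul_simple y i with hy | hy
        · -- length increases
          have h1 : lWeak cs y (v * s i) := lWeak_lift cs i hyW (by omega) (by omega)
          have h2 : bruhat cs y (w * s i) := bruhat_lift_up cs i hdesc' hyB (by omega)
          exact bruhat_mul_simple_right cs i (hmax y h1 h2) hminc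
        · -- length decreases
          have h1 : lWeak cs (y * s i) (v * s i) := by
            unfold lWeak at hyW ⊢
            have he : (v * s i) * (y * s i)⁻¹ = v * y⁻¹ := by
              rw [mul_inv_rev, cs.inv_simple, ← mul_assoc,
                mul_assoc v (s i) (s i), cs.simple_mul_simple_self, mul_one]
            rw [he]
            omega
          have h2 : bruhat cs (y * s i) (w * s i) :=
            bruhat_lift_down cs i hdesc' hyB (by omega)
          have h3 := bruhat_mul_simple_both cs i (hmax _ h1 h2) hminc
          rwa [cs.simple_mul_simple_cancel_right] at h3

end Main

end BruhatAux

/-- In a finite Coxeter group, for every `v, w` the set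
`[e,v]_L ∩ [e,w] = {x : x ≤_L v and x ≤ w}` has a unique element of maximal length. -/
theorem stmt2 {B W : Type*} [Group W] {M : CoxeterMatrix B} (cs : CoxeterSystem M W)
    [Finite W] (v w : W) :
    ∃! x : W, (lWeak cs x v ∧ bruhat cs x w) ∧
      ∀ y : W, lWeak cs y v → bruhat cs y w → cs.length y ≤ cs.length x := by
  obtain ⟨m, ⟨hmW, hmB⟩, hmax⟩ := BruhatAux.exists_max cs (cs.length w) w rfl v
  refine ⟨m, ⟨⟨hmW, hmB⟩, fun y hyW hyB => BruhatAux.bruhat_length_le cs (hmax y hyW hyB)⟩, ?_⟩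
  rintro x ⟨⟨hxW, hxB⟩, hxmax⟩
  exact BruhatAux.bruhat_eq_of_length_ge cs (hmax x hxW hxB) (hxmax m hmW hmB)
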